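/- arXiv:2006.12565 — 2 statements merged into one kernel-verified Lean document; each statement's English description precedes it below -/
import Mathlib

section
/- If z₁,…,z₅ are nonzero complex numbers, indices mod 5, satisfying 1 − zᵢ = z_{i−1}·z_{i+1} for all i, and none of the zᵢ equals 1, then there exist x, y ∈ ℂ with xy ≠ 0, x ≠ 1, y ≠ 1, xy ≠ 1 such that (z₁,…,z₅) = (x, (1−x)/(1−xy), (1−y)/(1−xy), y, 1−xy) up to the 5-fold cyclic symmetry; conversely, for any such x, y, the tuple (x, (1−x)/(1−xy), (1−y)/(1−xy), y, 1−xy) satisfies 1 − zᵢ = z_{i−1}z_{i+1} for all i ∈ ℤ/5. -/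
/-- The explicit 5-tuple `(x, (1−x)/(1−xy), (1−y)/(1−xy), y, 1−xy)`,
indexed by `ℤ/5`. -/
noncomputable def fiveTuple (x y : ℂ) : ZMod 5 → ℂ := fun i =>
  if i = 0 then x
  else if i = 1 then (1 - x) / (1 - x * y)
  else if i = 2 then (1 - y) / (1 - x * y)
  else if i = 3 then y
  else 1 - x * y

lemma ft0 (x y : ℂ) : fiveTuple x y 0 = x := rfl
lemma ft1 (x y : ℂ) : fiveTuple x y 1 = (1 - x) / (1 - x * y) := rfl
lemma ft2 (x y : ℂ) : fiveTuple x y 2 = (1 - y) / (1 - x * y) := rfl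
lemma ft3 (x y : ℂ) : fiveTuple x y 3 = y := rfl
lemma ft4 (x y : ℂ) : fiveTuple x y 4 = 1 - x * y := rfl

/-- Nonzero `z₁,…,z₅ ≠ 1` (indices mod 5) satisfy `1 − zᵢ = z_{i−1}z_{i+1}` for all
`i` if and only if, up to cyclic symmetry, they are of the form
`(x, (1−x)/(1−xy), (1−y)/(1−xy), y, 1−xy)` with `xy ≠ 0`, `x ≠ 1`, `y ≠ 1`, `xy ≠ 1`. -/
theorem five_term_parametrization :
    (∀ z : ZMod 5 → ℂ, (∀ i, z i ≠ 0) → (∀ i, z i ≠ 1) →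
      (∀ i, 1 - z i = z (i - 1) * z (i + 1)) →
      ∃ x y : ℂ, x * y ≠ 0 ∧ x ≠ 1 ∧ y ≠ 1 ∧ x * y ≠ 1 ∧
        ∃ k : ZMod 5, ∀ i : ZMod 5, z (i + k) = fiveTuple x y i) ∧
    (∀ x y : ℂ, x * y ≠ 0 → x ≠ 1 → y ≠ 1 → x * y ≠ 1 →
      ∀ i : ZMod 5, 1 - fiveTuple x y i = fiveTuple x y (i - 1) * fiveTuple x y (i + 1)) := by
  constructor
  · intro z hz0 hz1 hrel
    have e4 : (4 : ZMod 5) - 1 = 3 := by decide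
    have e4' : (4 : ZMod 5) + 1 = 0 := by decide
    have e0 : (0 : ZMod 5) - 1 = 4 := by decide
    have e3 : (3 : ZMod 5) - 1 = 2 := by decide
    have h4 : z 4 = 1 - z 0 * z 3 := by
      have h := hrel 4
      rw [e4, e4'] at h
      linear_combination -h
    refine ⟨z 0, z 3, mul_ne_zero (hz0 0) (hz0 3), hz1 0, hz1 3, ?_, 0, ?_⟩
    · intro h
      exact hz0 4 (by rw [h4, h]; ring)
    · have hz4 : z 4 ≠ 0 := hz0 4
      have h0 : 1 - z 0 = z 4 * z 1 := by
        have h := hrel 0; rw [e0] at h; simpa using h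
      have h3 : 1 - z 3 = z 2 * z 4 := by
        have h := hrel 3; rw [e3, show (3 : ZMod 5) + 1 = 4 by decide] at h; simpa using h
      have hcase : ∀ j : ZMod 5, j = 0 ∨ j = 1 ∨ j = 2 ∨ j = 3 ∨ j = 4 := by decide
      intro i
      rcases hcase i with h | h | h | h | h <;> subst h <;>
        rw [add_zero]
      · rw [ft0]
      · rw [ft1, eq_div_iff (by rw [h4] at hz4; exact hz4)]
        linear_combination -h0 - z 1 * h4
      · rw [ft2, eq_div_iff (by rw [h4] at hz4; exact hz4)]
        linear_combination -h3 - z 2 * h4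
      · rw [ft3]
      · rw [ft4, ← h4]
  · intro x y hxy hx hy hxy1 i
    have hc : (1 : ℂ) - x * y ≠ 0 := sub_ne_zero.mpr (Ne.symm hxy1)
    have hcase : ∀ j : ZMod 5, j = 0 ∨ j = 1 ∨ j = 2 ∨ j = 3 ∨ j = 4 := by decide
    rcases hcase i with h | h | h | h | h <;> subst h
    · rw [show (0 : ZMod 5) - 1 = 4 by decide, show (0 : ZMod 5) + 1 = 1 by decide,
        ft0, ft4, ft1]
      field_simp
    · rw [show (1 : ZMod 5) - 1 = 0 by decide, show (1 : ZMod 5) + 1 = 2 by decide,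
        ft1, ft0, ft2]
      field_simp
      ring
    · rw [show (2 : ZMod 5) - 1 = 1 by decide, show (2 : ZMod 5) + 1 = 3 by decide,
        ft2, ft1, ft3]
      rw [mul_comm x y] at hc
      field_simp
      ring
    · rw [show (3 : ZMod 5) - 1 = 2 by decide, show (3 : ZMod 5) + 1 = 4 by decide,
        ft3, ft2, ft4]
      rw [mul_comm x y] at hc
      field_simp
    · rw [show (4 : ZMod 5) - 1 = 3 by decide, show (4 : ZMod 5) + 1 = 0 by decide,
        ft4, ft3, ft0]
      ring
end

section
/- Monodromy of the enhanced Rogers dilogarithm: fix z₀ ∈ (0,1) and lifts u₁ = log z₀, u₂ = log(1−z₀) (real logarithms). Let L(u₁,u₂) denote any function on {(u₁,u₂) ∈ ℂ² : e^{u₁}+e^{u₂}=1} with dL = (u₁ du₂ − u₂ du₁)/2 and L(u₁,u₂) ≡ Li₂(e^{u₁}) + (1/2)u₁u₂ mod 4π²ℤ near (log z₀, log(1−z₀)). Then for all (n₁,n₂) ∈ ℤ², L(u₁ + 2πi n₁, u₂ + 2πi n₂) ≡ L(u₁,u₂) + πi(n₁u₂ − n₂u₁) + 2π²n₁n₂ mod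 4π²·ℤ. -/
open Complex

/-- The dilogarithm, defined by its power series (its analytic continuation is
only used near the base point, where the series converges). -/
noncomputable def Li2 (z : ℂ) : ℂ := ∑' n : ℕ, z ^ (n + 1) / ((n : ℂ) + 1) ^ 2

namespace RogersAux

noncomputable def rho (t : ℝ) : ℝ := (1 - Real.cos (Real.pi * t)) / 2

lemma rho_hasDerivAt (t : ℝ) :
    HasDerivAt rho (Real.pi * Real.sin (Real.pi * t) / 2) t := by
  have h1 : HasDerivAt (fun x : ℝ => Real.pi * x) Real.pi t := by
    simpa using (hasDerivAt_id t).const_mul Real.pi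
  have h2 : HasDerivAt (fun x : ℝ => Real.cos (Real.pi * x))
      (-Real.sin (Real.pi * t) * Real.pi) t := (Real.hasDerivAt_cos _).comp t h1
  have h3 := ((hasDerivAt_const t (1:ℝ)).sub h2).div_const 2
  refine h3.congr_deriv ?_
  ring

lemma rho_nonneg (t : ℝ) : 0 ≤ rho t := by
  have := Real.cos_le_one (Real.pi * t); unfold rho; linarith

lemma rho_le_one (t : ℝ) : rho t ≤ 1 := by
  have := Real.neg_one_le_cos (Real.pi * t); unfold rho; linarith

lemma rho_zero : rho 0 = 0 := by simp [rho]

lemma rho_one : rho 1 = 1 := by simp [rho, Real.cos_pi]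

lemma one_sub_mem_slitPlane {w : ℂ} (h : ∀ r : ℝ, 1 ≤ r → w ≠ (r : ℂ)) :
    1 - w ∈ Complex.slitPlane := by
  rw [Complex.mem_slitPlane_iff]
  by_cases him : w.im = 0
  · left
    have hw : w = ((w.re : ℝ) : ℂ) := Complex.ext rfl (by simp [him])
    have hlt : w.re < 1 := by
      by_contra hc
      push_neg at hc
      exact h w.re hc hw
    simp only [Complex.sub_re, Complex.one_re, Complex.sub_im, Complex.one_im]
    linarith
  · right
    simpa using him

lemma transport (L : ℂ × ℂ → ℂ)
    (hdL : ∀ (γ δ γ' δ' : ℝ → ℂ),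
      (∀ t, Complex.exp (γ t) + Complex.exp (δ t) = 1) →
      (∀ t, HasDerivAt γ (γ' t) t) → (∀ t, HasDerivAt δ (δ' t) t) →
      ∀ t, HasDerivAt (fun s => L (γ s, δ s)) ((γ t * δ' t - δ t * γ' t) / 2) t)
    (γ δ γ' δ' : ℝ → ℂ) (hS : ∀ t, Complex.exp (γ t) + Complex.exp (δ t) = 1)
    (hγ : ∀ t, HasDerivAt γ (γ' t) t) (hδ : ∀ t, HasDerivAt δ (δ' t) t) (s t : ℝ) :
    L (γ t + 2 * Real.pi * I, δ t) - L (γ t, δ t) - Real.pi * I * δ t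
      = L (γ s + 2 * Real.pi * I, δ s) - L (γ s, δ s) - Real.pi * I * δ s := by
  have hS2 : ∀ r, Complex.exp (γ r + 2 * Real.pi * I) + Complex.exp (δ r) = 1 := by
    intro r
    rw [Complex.exp_add, Complex.exp_two_pi_mul_I, mul_one]
    exact hS r
  have hγ2 : ∀ r, HasDerivAt (fun x => γ x + 2 * Real.pi * I) (γ' r) r :=
    fun r => (hγ r).add_const _
  have key : ∀ r : ℝ, HasDerivAt
      (fun x => L (γ x + 2 * Real.pi * I, δ x) - L (γ x, δ x) - Real.pi * I * δ x) 0 r := by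
    intro r
    have h1 := hdL _ _ _ _ hS2 hγ2 hδ r
    have h2 := hdL _ _ _ _ hS hγ hδ r
    have h3 : HasDerivAt (fun x => (Real.pi : ℂ) * I * δ x)
        ((Real.pi : ℂ) * I * δ' r) r := (hδ r).const_mul _
    have h4 := (h1.sub h2).sub h3
    refine h4.congr_deriv ?_
    ring
  exact is_const_of_deriv_eq_zero (fun r => (key r).differentiableAt)
    (fun r => (key r).deriv) t s

lemma logSeries {z : ℂ} (hz : ‖z‖ < 1) :
    HasSum (fun n : ℕ => z ^ (n + 1) / ((n : ℂ) + 1)) (-Complex.log (1 - z)) := by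
  have h := Complex.hasSum_taylorSeries_neg_log hz
  have h2 := (hasSum_nat_add_iff (f := fun n : ℕ => z ^ n / (n : ℂ)) 1).mpr
    (by simpa using h)
  have e : (fun n : ℕ => z ^ (n + 1) / ((n : ℂ) + 1)) = fun n => z ^ (n + 1) / ((n + 1 : ℕ) : ℂ) := by
    funext n; simp
  rw [e]; exact h2

lemma loop (L : ℂ × ℂ → ℂ)
    (hdL : ∀ (γ δ γ' δ' : ℝ → ℂ),
      (∀ t, Complex.exp (γ t) + Complex.exp (δ t) = 1) →
      (∀ t, HasDerivAt γ (γ' t) t) → (∀ t, HasDerivAt δ (δ' t) t) →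
      ∀ t, HasDerivAt (fun s => L (γ s, δ s)) ((γ t * δ' t - δ t * γ' t) / 2) t)
    (a b : ℂ) (ha : a.re < 0) (hab : Complex.exp a + Complex.exp b = 1) :
    ∃ m : ℤ, L (a + 2 * Real.pi * I, b)
      = L (a, b) + Real.pi * I * b + 4 * Real.pi ^ 2 * m := by
  have h1a : (1 : ℂ) - Complex.exp a = Complex.exp b := by linear_combination -hab
  have hne : (1 : ℂ) - Complex.exp a ≠ 0 := by
    rw [h1a]; exact Complex.exp_ne_zero b
  set c : ℂ := b - Complex.log (1 - Complex.exp a) with hc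
  have hcexp : Complex.exp c = 1 := by
    rw [hc, Complex.exp_sub, Complex.exp_log hne, h1a, div_self (Complex.exp_ne_zero b)]
  obtain ⟨k, hk⟩ := Complex.exp_eq_one_iff.mp hcexp
  set γ : ℝ → ℂ := fun t => a + 2 * Real.pi * I * t with hγdef
  have hγre : ∀ t, (γ t).re = a.re := by
    intro t
    simp [hγdef, Complex.add_re, Complex.mul_re, Complex.mul_im, Complex.I_re, Complex.I_im,
      Complex.ofReal_re, Complex.ofReal_im]
  have hr : ∀ t, ‖Complex.exp (γ t)‖ = Real.exp a.re := by
    intro t; rw [Complex.norm_exp, hγre]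
  have hrlt : Real.exp a.re < 1 := Real.exp_lt_one_iff.mpr ha
  have hr0 : (0:ℝ) ≤ Real.exp a.re := (Real.exp_pos _).le
  have hγd : ∀ t : ℝ, HasDerivAt γ (2 * Real.pi * I) t := by
    intro t
    have h0 : HasDerivAt (fun t : ℝ => ((t : ℝ) : ℂ)) 1 t := by
      simpa using (hasDerivAt_id t).ofReal_comp
    simpa [hγdef] using (h0.const_mul (2 * (Real.pi:ℂ) * I)).const_add a
  set δ : ℝ → ℂ := fun t => Complex.log (1 - Complex.exp (γ t)) + c with hδdef
  have hslit : ∀ t, 1 - Complex.exp (γ t) ∈ Complex.slitPlane := by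
    intro t
    rw [Complex.mem_slitPlane_iff]
    left
    have h1 := Complex.re_le_norm (Complex.exp (γ t))
    have h2 : ‖Complex.exp (γ t)‖ < 1 := by
      rw [hr]; exact hrlt
    simp only [Complex.sub_re, Complex.one_re]
    linarith
  have hδne : ∀ t, (1:ℂ) - Complex.exp (γ t) ≠ 0 :=
    fun t => Complex.slitPlane_ne_zero (hslit t)
  have hSδ : ∀ t, Complex.exp (δ t) = 1 - Complex.exp (γ t) := by
    intro t
    simp only [hδdef]
    rw [Complex.exp_add, Complex.exp_log (hδne t), hcexp, mul_one]
  have hS : ∀ t, Complex.exp (γ t) + Complex.exp (δ t) = 1 := by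
    intro t; rw [hSδ t]; ring
  set δ' : ℝ → ℂ := fun t => -(Complex.exp (γ t) * (2 * Real.pi * I)) / (1 - Complex.exp (γ t))
    with hδ'def
  have hδd : ∀ t, HasDerivAt δ (δ' t) t := by
    intro t
    have h1 : HasDerivAt (fun x => 1 - Complex.exp (γ x))
        (-(Complex.exp (γ t) * (2 * Real.pi * I))) t := by
      simpa using ((hγd t).cexp.const_sub 1)
    exact (h1.clog_real (hslit t)).add_const c
  -- derivative of t ↦ Li2 (exp (γ t))
  have hgeom : Summable (fun n : ℕ => Real.exp a.re ^ (n+1)) := by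
    have := (summable_geometric_of_lt_one hr0 hrlt).mul_left (Real.exp a.re)
    refine this.congr fun n => ?_
    rw [pow_succ]
    ring
  have hrn : ∀ (n : ℕ) (x : ℝ), ‖Complex.exp (((n:ℂ)+1) * γ x)‖ = Real.exp a.re ^ (n+1) := by
    intro n x
    rw [show ((n:ℂ)+1) = (((n+1:ℕ):ℝ):ℂ) by push_cast; ring]
    rw [Complex.norm_exp, Complex.re_ofReal_mul, hγre]
    push_cast
    rw [← Real.exp_nat_mul]
    push_cast
    ring_nf
  have hen : ∀ (n : ℕ) (w : ℂ), Complex.exp (((n:ℂ)+1) * w) = Complex.exp w ^ (n+1) := by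
    intro n w
    rw [show ((n:ℂ)+1) = ((n+1:ℕ):ℂ) by push_cast; ring, Complex.exp_nat_mul]
  have hLi2 : ∀ t : ℝ, HasDerivAt (fun x => Li2 (Complex.exp (γ x)))
      (2 * Real.pi * I * -(δ t - c)) t := by
    intro t
    have key := hasDerivAt_tsum
      (u := fun n : ℕ => 2 * Real.pi * Real.exp a.re ^ (n+1))
      (g := fun (n : ℕ) (x : ℝ) => Complex.exp (((n:ℂ)+1) * γ x) / ((n:ℂ)+1)^2)
      (g' := fun (n : ℕ) (x : ℝ) =>
        Complex.exp (((n:ℂ)+1) * γ x) * (2 * Real.pi * I) / ((n:ℂ)+1))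
      (y₀ := 0)
      (hgeom.mul_left (2 * Real.pi))
      (by
        intro n x
        have hnne : ((n:ℂ)+1) ≠ 0 := Nat.cast_add_one_ne_zero n
        have h1 : HasDerivAt (fun y : ℝ => ((n:ℂ)+1) * γ y) (((n:ℂ)+1) * (2 * Real.pi * I)) x :=
          (hγd x).const_mul _
        have h2 := h1.cexp.div_const (((n:ℂ)+1)^2)
        refine h2.congr_deriv ?_
        field_simp)
      (by
        intro n x
        have h2 : ‖(2 * (Real.pi:ℂ) * I)‖ = 2 * Real.pi := by
          rw [norm_mul, norm_mul, Complex.norm_I, mul_one, Complex.norm_real,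
            Real.norm_eq_abs, _root_.abs_of_nonneg Real.pi_pos.le]
          norm_num
        have h3 : (1:ℝ) ≤ ‖((n:ℂ)+1)‖ := by
          rw [show ((n:ℂ)+1) = ((n+1 : ℕ) : ℂ) by push_cast; ring, Complex.norm_natCast]
          exact_mod_cast Nat.succ_le_succ (Nat.zero_le n)
        calc ‖Complex.exp (((n:ℂ)+1) * γ x) * (2 * Real.pi * I) / ((n:ℂ)+1)‖
            = Real.exp a.re ^ (n+1) * (2 * Real.pi) / ‖((n:ℂ)+1)‖ := by
              rw [norm_div, norm_mul, hrn, h2]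
          _ ≤ Real.exp a.re ^ (n+1) * (2 * Real.pi) := div_le_self (by positivity) h3
          _ = 2 * Real.pi * Real.exp a.re ^ (n+1) := by ring)
      (by
        refine Summable.of_norm (hgeom.of_nonneg_of_le (fun n => norm_nonneg _) fun n => ?_)
        rw [norm_div, hrn]
        have h3 : (1:ℝ) ≤ ‖(((n:ℂ)+1)^2 : ℂ)‖ := by
          rw [norm_pow, show ((n:ℂ)+1) = ((n+1 : ℕ) : ℂ) by push_cast; ring,
            Complex.norm_natCast]
          have h4 : (1:ℝ) ≤ ((n+1:ℕ):ℝ) := by exact_mod_cast Nat.succ_le_succ (Nat.zero_le n)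
          nlinarith
        exact div_le_self (by positivity) h3)
      t
    have hz1 : ‖Complex.exp (γ t)‖ < 1 := by rw [hr]; exact hrlt
    have hsum := (logSeries hz1).tsum_eq
    have hterm : (fun n : ℕ => Complex.exp (((n:ℂ)+1) * γ t) * (2*Real.pi*I) / ((n:ℂ)+1))
        = fun n : ℕ => (2*(Real.pi:ℂ)*I) * (Complex.exp (γ t)^(n+1) / ((n:ℂ)+1)) := by
      funext n
      rw [hen]
      ring
    rw [hterm, tsum_mul_left, hsum] at key
    have hlog : Complex.log (1 - Complex.exp (γ t)) = δ t - c := by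
      simp only [hδdef]; ring
    rw [hlog] at key
    have hfun : (fun y => ∑' (n : ℕ), Complex.exp (((n:ℂ)+1) * γ y) / ((n:ℂ)+1)^2)
        = fun y => Li2 (Complex.exp (γ y)) := by
      funext y
      rw [Li2]
      exact tsum_congr fun n => by rw [hen]
    rw [hfun] at key
    convert key using 1
  -- the function Φ is constant
  have hC : ∀ t : ℝ, HasDerivAt
      (fun x => L (γ x, δ x) - Li2 (Complex.exp (γ x)) - γ x * δ x / 2 + c * γ x) 0 t := by
    intro t
    have h1 := hdL γ δ (fun _ => 2*Real.pi*I) δ' hS hγd hδd t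
    have h2 := hLi2 t
    have h3 := ((hγd t).mul (hδd t)).div_const 2
    have h4 : HasDerivAt (fun x => c * γ x) (c * (2*Real.pi*I)) t := (hγd t).const_mul c
    have h5 := ((h1.sub h2).sub h3).add h4
    refine h5.congr_deriv ?_
    ring
  have heq := is_const_of_deriv_eq_zero (fun r => (hC r).differentiableAt)
    (fun r => (hC r).deriv) 1 0
  have hγ0 : γ 0 = a := by simp [hγdef]
  have hγ1 : γ 1 = a + 2 * Real.pi * I := by simp [hγdef]
  have hexp1 : Complex.exp (γ 1) = Complex.exp a := by
    rw [hγ1, Complex.exp_add, Complex.exp_two_pi_mul_I, mul_one]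
  have hexp0 : Complex.exp (γ 0) = Complex.exp a := by rw [hγ0]
  have hδ0 : δ 0 = b := by
    simp only [hδdef]
    rw [hexp0, hc]
    ring
  have hδ1 : δ 1 = b := by
    simp only [hδdef]
    rw [hexp1, hc]
    ring
  rw [hγ0, hγ1, hδ0, hδ1] at heq
  rw [show Complex.exp (a + 2 * Real.pi * I) = Complex.exp a from by
    rw [Complex.exp_add, Complex.exp_two_pi_mul_I, mul_one]] at heq
  refine ⟨k, ?_⟩
  linear_combination heq - 2*(Real.pi:ℂ)*I*hk - 4*(Real.pi:ℂ)^2*(k:ℂ)*Complex.I_sq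

lemma K1A (L : ℂ × ℂ → ℂ)
    (hdL : ∀ (γ δ γ' δ' : ℝ → ℂ),
      (∀ t, Complex.exp (γ t) + Complex.exp (δ t) = 1) →
      (∀ t, HasDerivAt γ (γ' t) t) → (∀ t, HasDerivAt δ (δ' t) t) →
      ∀ t, HasDerivAt (fun s => L (γ s, δ s)) ((γ t * δ' t - δ t * γ' t) / 2) t)
    (u₁ u₂ : ℂ) (hs : Complex.exp u₁ + Complex.exp u₂ = 1)
    (h1 : ∀ r : ℝ, 1 ≤ r → Complex.exp u₁ ≠ (r : ℂ)) :
    ∃ m : ℤ, L (u₁ + 2 * Real.pi * I, u₂)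
      = L (u₁, u₂) + Real.pi * I * u₂ + 4 * Real.pi ^ 2 * m := by
  set a : ℂ := -1 + u₁.im * I with hadef
  have hare : a.re = -1 := by simp [hadef]
  have hu1a : u₁ - a = ((u₁.re + 1 : ℝ) : ℂ) := by
    rw [hadef]
    apply Complex.ext <;> simp
  set γ : ℝ → ℂ := fun t => u₁ + (rho t : ℂ) * (a - u₁) with hγdef
  -- the path avoids real values ≥ 1 of exp
  have hseg : ∀ t : ℝ, ∀ r : ℝ, 1 ≤ r → Complex.exp (γ t) ≠ (r : ℂ) := by
    intro t r hr hcon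
    set x := rho t with hx
    have hx0 : 0 ≤ x := rho_nonneg t
    have hx1 : x ≤ 1 := rho_le_one t
    have hwre : (γ t).re = u₁.re + x * (-1 - u₁.re) := by
      simp [hx, hγdef, hadef, Complex.add_re, Complex.mul_re, Complex.mul_im,
        Complex.ofReal_re, Complex.ofReal_im]
    have habs : Real.exp ((γ t).re) = r := by
      have h := congrArg (‖·‖) hcon
      rwa [Complex.norm_exp, Complex.norm_real, Real.norm_eq_abs, _root_.abs_of_nonneg (by linarith)] at h
    have hre0 : 0 ≤ (γ t).re := by
      by_contra hcc
      push_neg at hcc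
      have := Real.exp_lt_one_iff.mpr hcc
      linarith
    have hxlt : x < 1 := by
      rcases lt_or_eq_of_le hx1 with h | h
      · exact h
      · exfalso; rw [hwre, h] at hre0; linarith
    have hu1re : 0 ≤ u₁.re := by
      rw [hwre] at hre0
      nlinarith
    -- exp u₁ is then a real number ≥ 1
    have hkey : Complex.exp u₁ = ((r * Real.exp (x * (u₁.re + 1)) : ℝ) : ℂ) := by
      have e2 : Complex.exp u₁ = Complex.exp (γ t) * Complex.exp ((x:ℂ) * (u₁ - a)) := by
        rw [← Complex.exp_add]
        congr 1
        rw [hγdef]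
        push_cast
        ring
      rw [e2, hcon, hu1a]
      push_cast
      ring
    refine h1 (r * Real.exp (x * (u₁.re + 1))) ?_ hkey
    have hy : 0 ≤ x * (u₁.re + 1) := mul_nonneg hx0 (by linarith)
    have h5 := Real.add_one_le_exp (x * (u₁.re + 1))
    nlinarith
  have hslit : ∀ t, 1 - Complex.exp (γ t) ∈ Complex.slitPlane :=
    fun t => one_sub_mem_slitPlane (hseg t)
  have hδne : ∀ t, (1:ℂ) - Complex.exp (γ t) ≠ 0 :=
    fun t => Complex.slitPlane_ne_zero (hslit t)
  have h1a : (1 : ℂ) - Complex.exp u₁ = Complex.exp u₂ := by linear_combination -hs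
  have hne : (1 : ℂ) - Complex.exp u₁ ≠ 0 := by rw [h1a]; exact Complex.exp_ne_zero u₂
  set c : ℂ := u₂ - Complex.log (1 - Complex.exp u₁) with hc
  have hcexp : Complex.exp c = 1 := by
    rw [hc, Complex.exp_sub, Complex.exp_log hne, h1a, div_self (Complex.exp_ne_zero u₂)]
  set δ : ℝ → ℂ := fun t => Complex.log (1 - Complex.exp (γ t)) + c with hδdef
  have hSδ : ∀ t, Complex.exp (δ t) = 1 - Complex.exp (γ t) := by
    intro t
    simp only [hδdef]
    rw [Complex.exp_add, Complex.exp_log (hδne t), hcexp, mul_one]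
  have hS : ∀ t, Complex.exp (γ t) + Complex.exp (δ t) = 1 := by
    intro t; rw [hSδ t]; ring
  set γ' : ℝ → ℂ := fun t => ((Real.pi * Real.sin (Real.pi * t) / 2 : ℝ) : ℂ) * (a - u₁)
    with hγ'def
  have hγd : ∀ t, HasDerivAt γ (γ' t) t := by
    intro t
    exact (((rho_hasDerivAt t).ofReal_comp).mul_const (a - u₁)).const_add u₁
  set δ' : ℝ → ℂ := fun t => -(Complex.exp (γ t) * γ' t) / (1 - Complex.exp (γ t)) with hδ'def
  have hδd : ∀ t, HasDerivAt δ (δ' t) t := by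
    intro t
    have h2 : HasDerivAt (fun x => 1 - Complex.exp (γ x))
        (-(Complex.exp (γ t) * γ' t)) t := by
      simpa using ((hγd t).cexp.const_sub 1)
    exact (h2.clog_real (hslit t)).add_const c
  have htrans := transport L hdL γ δ γ' δ' hS hγd hδd 0 1
  have hγ0 : γ 0 = u₁ := by simp [hγdef, rho_zero]
  have hγ1 : γ 1 = a := by
    simp only [hγdef, rho_one]
    push_cast
    ring
  have hδ0 : δ 0 = u₂ := by
    simp only [hδdef]
    rw [hγ0, hc]
    ring
  set b : ℂ := Complex.log (1 - Complex.exp a) + c with hb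
  have hδ1 : δ 1 = b := by simp only [hδdef]; rw [hγ1]
  have hab : Complex.exp a + Complex.exp b = 1 := by
    have := hS 1
    rwa [hγ1, hδ1] at this
  obtain ⟨m, hm⟩ := loop L hdL a b (by rw [hare]; norm_num) hab
  refine ⟨m, ?_⟩
  rw [hγ0, hγ1, hδ0, hδ1] at htrans
  linear_combination hm - htrans

lemma K1 (L : ℂ × ℂ → ℂ)
    (hdL : ∀ (γ δ γ' δ' : ℝ → ℂ),
      (∀ t, Complex.exp (γ t) + Complex.exp (δ t) = 1) →
      (∀ t, HasDerivAt γ (γ' t) t) → (∀ t, HasDerivAt δ (δ' t) t) →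
      ∀ t, HasDerivAt (fun s => L (γ s, δ s)) ((γ t * δ' t - δ t * γ' t) / 2) t)
    (u₁ u₂ : ℂ) (hs : Complex.exp u₁ + Complex.exp u₂ = 1) :
    ∃ m : ℤ, L (u₁ + 2 * Real.pi * I, u₂)
      = L (u₁, u₂) + Real.pi * I * u₂ + 4 * Real.pi ^ 2 * m := by
  by_cases hcase : ∀ r : ℝ, 1 ≤ r → Complex.exp u₁ ≠ (r : ℂ)
  · exact K1A L hdL u₁ u₂ hs hcase
  push_neg at hcase
  obtain ⟨r, hr1, hre⟩ := hcase
  have h2 : Complex.exp u₂ = ((1 - r : ℝ) : ℂ) := by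
    push_cast
    linear_combination hs - hre
  have hrgt : 1 < r := by
    rcases lt_or_eq_of_le hr1 with h | h
    · exact h
    · exfalso
      apply Complex.exp_ne_zero u₂
      rw [h2, ← h]
      norm_num
  -- move u₂ up by (π/2)i
  set δ : ℝ → ℂ := fun t => u₂ + (rho t : ℂ) * ((Real.pi / 2 : ℝ) * I) with hδdef
  have hseg : ∀ t : ℝ, ∀ r' : ℝ, 1 ≤ r' → Complex.exp (δ t) ≠ (r' : ℂ) := by
    intro t r' hr' hcon
    have hθ0 : 0 ≤ rho t * (Real.pi / 2) :=
      mul_nonneg (rho_nonneg t) (by positivity)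
    have hθ1 : rho t * (Real.pi / 2) ≤ Real.pi / 2 := by
      have := rho_le_one t
      nlinarith [Real.pi_pos]
    have hcos : 0 ≤ Real.cos (rho t * (Real.pi / 2)) := by
      apply Real.cos_nonneg_of_mem_Icc
      constructor <;> [linarith; linarith]
    have he : Complex.exp (δ t)
        = ((1 - r : ℝ) : ℂ) * Complex.exp (((rho t * (Real.pi / 2) : ℝ) : ℂ) * I) := by
      simp only [hδdef]
      rw [Complex.exp_add, h2]
      congr 2
      push_cast
      ring
    rw [he] at hcon
    have him := congrArg Complex.re hcon
    rw [Complex.ofReal_re, Complex.re_ofReal_mul, Complex.exp_ofReal_mul_I_re] at him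
    nlinarith
  have hslit : ∀ t, 1 - Complex.exp (δ t) ∈ Complex.slitPlane :=
    fun t => one_sub_mem_slitPlane (hseg t)
  have hδne : ∀ t, (1:ℂ) - Complex.exp (δ t) ≠ 0 :=
    fun t => Complex.slitPlane_ne_zero (hslit t)
  have h1a : (1 : ℂ) - Complex.exp u₂ = Complex.exp u₁ := by linear_combination -hs
  have hne : (1 : ℂ) - Complex.exp u₂ ≠ 0 := by rw [h1a]; exact Complex.exp_ne_zero u₁
  set c : ℂ := u₁ - Complex.log (1 - Complex.exp u₂) with hc
  have hcexp : Complex.exp c = 1 := by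
    rw [hc, Complex.exp_sub, Complex.exp_log hne, h1a, div_self (Complex.exp_ne_zero u₁)]
  set γ : ℝ → ℂ := fun t => Complex.log (1 - Complex.exp (δ t)) + c with hγdef
  have hSγ : ∀ t, Complex.exp (γ t) = 1 - Complex.exp (δ t) := by
    intro t
    simp only [hγdef]
    rw [Complex.exp_add, Complex.exp_log (hδne t), hcexp, mul_one]
  have hS : ∀ t, Complex.exp (γ t) + Complex.exp (δ t) = 1 := by
    intro t; rw [hSγ t]; ring
  set δ' : ℝ → ℂ := fun t => ((Real.pi * Real.sin (Real.pi * t) / 2 : ℝ) : ℂ)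
    * ((Real.pi / 2 : ℝ) * I) with hδ'def
  have hδd : ∀ t, HasDerivAt δ (δ' t) t := by
    intro t
    exact (((rho_hasDerivAt t).ofReal_comp).mul_const _).const_add u₂
  set γ' : ℝ → ℂ := fun t => -(Complex.exp (δ t) * δ' t) / (1 - Complex.exp (δ t)) with hγ'def
  have hγd : ∀ t, HasDerivAt γ (γ' t) t := by
    intro t
    have h3 : HasDerivAt (fun x => 1 - Complex.exp (δ x))
        (-(Complex.exp (δ t) * δ' t)) t := by
      simpa using ((hδd t).cexp.const_sub 1)
    exact (h3.clog_real (hslit t)).add_const c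
  have htrans := transport L hdL γ δ γ' δ' hS hγd hδd 0 1
  have hδ0 : δ 0 = u₂ := by simp [hδdef, rho_zero]
  have hγ0 : γ 0 = u₁ := by
    simp only [hγdef]
    rw [hδ0, hc]
    ring
  -- endpoint
  have hend : ∀ r' : ℝ, 1 ≤ r' → Complex.exp (γ 1) ≠ (r' : ℂ) := by
    intro r' hr' hcon
    have he1 : Complex.exp (δ 1) = ((1 - r : ℝ) : ℂ) * I := by
      simp only [hδdef, rho_one]
      rw [Complex.exp_add, h2]
      congr 1
      rw [Complex.ofReal_one, one_mul, Complex.exp_mul_I, ← Complex.ofReal_cos,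
        ← Complex.ofReal_sin, Real.cos_pi_div_two, Real.sin_pi_div_two]
      simp
    have := congrArg Complex.im hcon
    rw [hSγ 1, he1, Complex.ofReal_im] at this
    simp [Complex.sub_im, Complex.mul_im, Complex.I_im, Complex.I_re,
      Complex.ofReal_re, Complex.ofReal_im] at this
    linarith
  obtain ⟨m, hm⟩ := K1A L hdL (γ 1) (δ 1) (hS 1) hend
  refine ⟨m, ?_⟩
  rw [hδ0, hγ0] at htrans
  linear_combination hm - htrans
lemma K2 (L : ℂ × ℂ → ℂ)
    (hdL : ∀ (γ δ γ' δ' : ℝ → ℂ),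
      (∀ t, Complex.exp (γ t) + Complex.exp (δ t) = 1) →
      (∀ t, HasDerivAt γ (γ' t) t) → (∀ t, HasDerivAt δ (δ' t) t) →
      ∀ t, HasDerivAt (fun s => L (γ s, δ s)) ((γ t * δ' t - δ t * γ' t) / 2) t)
    (u₁ u₂ : ℂ) (hs : Complex.exp u₁ + Complex.exp u₂ = 1) :
    ∃ m : ℤ, L (u₁, u₂ + 2 * Real.pi * I)
      = L (u₁, u₂) - Real.pi * I * u₁ + 4 * Real.pi ^ 2 * m := by
  have hdL' : ∀ (γ δ γ' δ' : ℝ → ℂ),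
      (∀ t, Complex.exp (γ t) + Complex.exp (δ t) = 1) →
      (∀ t, HasDerivAt γ (γ' t) t) → (∀ t, HasDerivAt δ (δ' t) t) →
      ∀ t, HasDerivAt (fun s => (fun p : ℂ × ℂ => -L (p.2, p.1)) (γ s, δ s))
        ((γ t * δ' t - δ t * γ' t) / 2) t := by
    intro γ δ γ' δ' hS hγ hδ t
    have h := (hdL δ γ δ' γ' (fun t => by rw [add_comm]; exact hS t) hδ hγ t).neg
    refine h.congr_deriv ?_
    ring
  obtain ⟨m, hm⟩ := K1 (fun p : ℂ × ℂ => -L (p.2, p.1)) hdL' u₂ u₁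
    (by rw [add_comm]; exact hs)
  simp only at hm
  exact ⟨-m, by push_cast; linear_combination -hm⟩

lemma surface_shift (v₁ v₂ : ℂ) (k₁ k₂ : ℤ) (h : Complex.exp v₁ + Complex.exp v₂ = 1) :
    Complex.exp (v₁ + 2 * Real.pi * I * k₁) + Complex.exp (v₂ + 2 * Real.pi * I * k₂) = 1 := by
  rw [Complex.exp_add, Complex.exp_add,
    show (2 * (Real.pi:ℂ) * I * k₁ : ℂ) = (k₁:ℂ) * (2 * Real.pi * I) by ring,
    show (2 * (Real.pi:ℂ) * I * k₂ : ℂ) = (k₂:ℂ) * (2 * Real.pi * I) by ring,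
    Complex.exp_int_mul_two_pi_mul_I, Complex.exp_int_mul_two_pi_mul_I, mul_one, mul_one]
  exact h

end RogersAux

/-- Monodromy of the enhanced Rogers dilogarithm.  Let `L` be any function on the
surface `{(u₁,u₂) : e^{u₁}+e^{u₂}=1}` with `dL = (u₁ du₂ − u₂ du₁)/2` (expressed
via differentiable paths in the surface) which agrees with
`Li₂(e^{u₁}) + ½u₁u₂ mod 4π²ℤ` near the base point `(log z₀, log(1−z₀))`,
`z₀ ∈ (0,1)`.  Then for all `(n₁,n₂) ∈ ℤ²`,
`L(u₁+2πin₁, u₂+2πin₂) ≡ L(u₁,u₂) + πi(n₁u₂−n₂u₁) + 2π²n₁n₂ mod 4π²ℤ`. -/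
theorem enhanced_Rogers_monodromy
    (z₀ : ℝ) (hz₀ : z₀ ∈ Set.Ioo (0 : ℝ) 1)
    (L : ℂ × ℂ → ℂ)
    (hdL : ∀ (γ δ γ' δ' : ℝ → ℂ),
      (∀ t, Complex.exp (γ t) + Complex.exp (δ t) = 1) →
      (∀ t, HasDerivAt γ (γ' t) t) → (∀ t, HasDerivAt δ (δ' t) t) →
      ∀ t, HasDerivAt (fun s => L (γ s, δ s)) ((γ t * δ' t - δ t * γ' t) / 2) t)
    (hbase : ∃ ε > (0 : ℝ), ∀ u₁ u₂ : ℂ,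
      Complex.exp u₁ + Complex.exp u₂ = 1 →
      ‖u₁ - (Real.log z₀ : ℂ)‖ < ε → ‖u₂ - (Real.log (1 - z₀) : ℂ)‖ < ε →
      ∃ m : ℤ, L (u₁, u₂) =
        Li2 (Complex.exp u₁) + u₁ * u₂ / 2 + 4 * Real.pi ^ 2 * m) :
    ∀ u₁ u₂ : ℂ, Complex.exp u₁ + Complex.exp u₂ = 1 →
      ∀ n₁ n₂ : ℤ, ∃ m : ℤ,
        L (u₁ + 2 * Real.pi * Complex.I * n₁, u₂ + 2 * Real.pi * Complex.I * n₂) =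
          L (u₁, u₂) + Real.pi * Complex.I * (n₁ * u₂ - n₂ * u₁) +
            2 * Real.pi ^ 2 * (n₁ * n₂) + 4 * Real.pi ^ 2 * m := by
  intro u₁ u₂ hs n₁ n₂
  suffices H : ∀ (k₁ k₂ : ℤ) (v₁ v₂ : ℂ), Complex.exp v₁ + Complex.exp v₂ = 1 →
      ∃ m : ℤ, L (v₁ + 2 * Real.pi * Complex.I * k₁, v₂ + 2 * Real.pi * Complex.I * k₂) =
        L (v₁, v₂) + Real.pi * Complex.I * (k₁ * v₂ - k₂ * v₁) +
          2 * Real.pi ^ 2 * (k₁ * k₂) + 4 * Real.pi ^ 2 * m by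
    exact H n₁ n₂ u₁ u₂ hs
  intro k₁
  induction k₁ using Int.induction_on with
  | zero =>
    intro k₂
    induction k₂ using Int.induction_on with
    | zero =>
      intro v₁ v₂ hv
      exact ⟨0, by norm_num⟩
    | succ i ih =>
      intro v₁ v₂ hv
      obtain ⟨m₂, h₂⟩ := ih v₁ v₂ hv
      obtain ⟨m₁, h₁⟩ := RogersAux.K2 L hdL (v₁ + 2 * Real.pi * Complex.I * ((0:ℤ):ℂ))
        (v₂ + 2 * Real.pi * Complex.I * ((i:ℤ):ℂ))
        (RogersAux.surface_shift v₁ v₂ 0 i hv)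
      refine ⟨m₁ + m₂, ?_⟩
      have e1 : v₂ + 2 * Real.pi * Complex.I * ((i:ℤ):ℂ) + 2 * Real.pi * I
          = v₂ + 2 * Real.pi * Complex.I * (((i:ℤ):ℂ) + 1) := by push_cast; ring
      rw [e1] at h₁
      push_cast at h₁ h₂ ⊢
      linear_combination h₁ + h₂ - 2 * (Real.pi:ℂ)^2 * ((0:ℤ):ℂ) * Complex.I_sq
    | pred i ih =>
      intro v₁ v₂ hv
      obtain ⟨m₂, h₂⟩ := ih v₁ v₂ hv
      obtain ⟨m₁, h₁⟩ := RogersAux.K2 L hdL (v₁ + 2 * Real.pi * Complex.I * ((0:ℤ):ℂ))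
        (v₂ + 2 * Real.pi * Complex.I * (((-i-1:ℤ)):ℂ))
        (RogersAux.surface_shift v₁ v₂ 0 (-i-1) hv)
      refine ⟨m₂ - m₁, ?_⟩
      have e1 : v₂ + 2 * Real.pi * Complex.I * (((-i-1:ℤ)):ℂ) + 2 * Real.pi * I
          = v₂ + 2 * Real.pi * Complex.I * ((-(i:ℂ))) := by push_cast; ring
      rw [e1] at h₁
      push_cast at h₁ h₂ ⊢
      linear_combination h₂ - h₁ + 2 * (Real.pi:ℂ)^2 * ((0:ℤ):ℂ) * Complex.I_sq
  | succ i ih =>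
    intro k₂ v₁ v₂ hv
    obtain ⟨m₂, h₂⟩ := ih k₂ v₁ v₂ hv
    obtain ⟨m₁, h₁⟩ := RogersAux.K1 L hdL (v₁ + 2 * Real.pi * Complex.I * ((i:ℤ):ℂ))
      (v₂ + 2 * Real.pi * Complex.I * (k₂:ℂ))
      (RogersAux.surface_shift v₁ v₂ i k₂ hv)
    refine ⟨m₁ + m₂ - k₂, ?_⟩
    have e1 : v₁ + 2 * Real.pi * Complex.I * ((i:ℤ):ℂ) + 2 * Real.pi * I
        = v₁ + 2 * Real.pi * Complex.I * (((i:ℤ):ℂ) + 1) := by push_cast; ring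
    rw [e1] at h₁
    push_cast at h₁ h₂ ⊢
    linear_combination h₁ + h₂ + 2 * (Real.pi:ℂ)^2 * (k₂:ℂ) * Complex.I_sq
  | pred i ih =>
    intro k₂ v₁ v₂ hv
    obtain ⟨m₂, h₂⟩ := ih k₂ v₁ v₂ hv
    obtain ⟨m₁, h₁⟩ := RogersAux.K1 L hdL (v₁ + 2 * Real.pi * Complex.I * ((-i-1:ℤ):ℂ))
      (v₂ + 2 * Real.pi * Complex.I * (k₂:ℂ))
      (RogersAux.surface_shift v₁ v₂ (-i-1) k₂ hv)
    refine ⟨m₂ - m₁ + k₂, ?_⟩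
    have e1 : v₁ + 2 * Real.pi * Complex.I * ((-i-1:ℤ):ℂ) + 2 * Real.pi * I
        = v₁ + 2 * Real.pi * Complex.I * (-(i:ℂ)) := by push_cast; ring
    rw [e1] at h₁
    push_cast at h₁ h₂ ⊢
    linear_combination h₂ - h₁ - 2 * (Real.pi:ℂ)^2 * (k₂:ℂ) * Complex.I_sq
end
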